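/- Let X_1,...,X_B be i.i.d. integrable real random variables and 1 < n ≤ B. Then the plug-in estimator V̂ = B^{-n} ∑_{(i_1,...,i_n)∈{1,...,B}^n} max{X_{i_1},...,X_{i_n}} satisfies E[V̂] ≤ θ_n = E[max{X_1,...,X_n}], i.e., V̂ is negatively biased. -/

import Mathlib

open MeasureTheory ProbabilityTheory

theorem V_stat_negatively_biased {Ω : Type*} [MeasurableSpace Ω] (μ : Measure Ω)
    [IsProbabilityMeasure μ] (n B : ℕ) (hn : 1 < n) (hnB : n ≤ B)
    (X : ℕ → Ω → ℝ) (hmeas : ∀ i, Measurable (X i))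
    (hindep : iIndepFun X μ)
    (hident : ∀ i, IdentDistrib (X i) (X 0) μ μ)
    (hint : ∀ i, Integrable (X i) μ) :
    ∫ ω, (∑ f : Fin n → Fin B,
        Finset.univ.sup' ⟨⟨0, by omega⟩, Finset.mem_univ _⟩ (fun i => X ((f i : ℕ) + 1) ω))
          / (B : ℝ) ^ n ∂μ
    ≤ ∫ ω, (Finset.Icc 1 n).sup' (by simpa [Finset.nonempty_Icc] using hn.le) (fun i => X i ω) ∂μ := by
  have hB : 0 < B := by omega
  -- measurability of sup' over any nonempty finset
  have hmeasS : ∀ (S : Finset ℕ) (hS : S.Nonempty),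
      Measurable (fun ω => S.sup' hS (fun i => X i ω)) := by
    intro S hS
    induction hS using Finset.Nonempty.cons_induction with
    | singleton i => simpa using hmeas i
    | cons i s hi hs ih =>
      simp only [Finset.sup'_cons (H := hs)]
      exact (hmeas i).sup ih
  -- integrability
  have hintS : ∀ (S : Finset ℕ) (hS : S.Nonempty),
      Integrable (fun ω => S.sup' hS (fun i => X i ω)) μ := by
    intro S hS
    induction hS using Finset.Nonempty.cons_induction with
    | singleton i => simpa using hint i
    | cons i s hi hs ih =>
      simp only [Finset.sup'_cons (H := hs)]
      simpa [Pi.sup_def] using (hint i).sup ih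
  -- CDF of max over S
  have hcdf : ∀ (S : Finset ℕ) (hS : S.Nonempty) (t : ℝ),
      (μ.map (fun ω => S.sup' hS (fun i => X i ω))) (Set.Iic t)
        = (μ.map (X 0) (Set.Iic t)) ^ S.card := by
    intro S hS t
    rw [Measure.map_apply (hmeasS S hS) measurableSet_Iic]
    have hpre : (fun ω => S.sup' hS (fun i => X i ω)) ⁻¹' Set.Iic t
        = ⋂ i ∈ S, X i ⁻¹' Set.Iic t := by
      ext ω
      simp [Finset.sup'_le_iff, Set.mem_iInter]
    rw [hpre,
      hindep.measure_inter_preimage_eq_mul S (sets := fun _ => Set.Iic t)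
        (fun i _ => measurableSet_Iic)]
    rw [Finset.prod_congr rfl (fun i _ => ?_), Finset.prod_const]
    rw [← Measure.map_apply (hmeas i) measurableSet_Iic, (hident i).map_eq]
  -- equality of expectation of max over equicardinal sets
  have key : ∀ (S T : Finset ℕ) (hS : S.Nonempty) (hT : T.Nonempty),
      S.card = T.card →
      ∫ ω, S.sup' hS (fun i => X i ω) ∂μ = ∫ ω, T.sup' hT (fun i => X i ω) ∂μ := by
    intro S T hS hT hcard
    have : IdentDistrib (fun ω => S.sup' hS (fun i => X i ω))
        (fun ω => T.sup' hT (fun i => X i ω)) μ μ := by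
      refine ⟨(hmeasS S hS).aemeasurable, (hmeasS T hT).aemeasurable, ?_⟩
      have : IsProbabilityMeasure (μ.map (fun ω => S.sup' hS (fun i => X i ω))) :=
        Measure.isProbabilityMeasure_map (hmeasS S hS).aemeasurable
      refine MeasureTheory.Measure.ext_of_Iic _ _ (fun t => ?_)
      rw [hcdf S hS t, hcdf T hT t, hcard]
    exact this.integral_eq
  set θ : ℝ := ∫ ω, (Finset.Icc 1 n).sup'
      (by simpa [Finset.nonempty_Icc] using hn.le) (fun i => X i ω) ∂μ with hθ
  -- bound for each tuple f
  have hbound : ∀ f : Fin n → Fin B,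
      ∫ ω, Finset.univ.sup' ⟨⟨0, by omega⟩, Finset.mem_univ _⟩
        (fun i => X ((f i : ℕ) + 1) ω) ∂μ ≤ θ := by
    intro f
    set S : Finset ℕ := Finset.univ.image (fun i : Fin n => (f i : ℕ) + 1) with hSdef
    have hS : S.Nonempty := by
      refine ⟨(f ⟨0, by omega⟩ : ℕ) + 1, ?_⟩
      exact Finset.mem_image_of_mem _ (Finset.mem_univ _)
    have heq : ∀ ω, Finset.univ.sup' ⟨⟨0, by omega⟩, Finset.mem_univ _⟩
        (fun i => X ((f i : ℕ) + 1) ω) = S.sup' hS (fun i => X i ω) := by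
      intro ω
      exact (Finset.sup'_image hS (fun i => X i ω)).symm
    simp_rw [heq]
    have hm1 : 1 ≤ S.card := Finset.card_pos.mpr hS
    have hmn : S.card ≤ n := by
      calc S.card ≤ Finset.univ.card := Finset.card_image_le
      _ = n := by simp
    have hTne : (Finset.Icc 1 S.card).Nonempty := by
      simpa [Finset.nonempty_Icc] using hm1
    rw [key S (Finset.Icc 1 S.card) hS hTne (by simp [Nat.card_Icc])]
    refine integral_mono (hintS _ hTne) (hintS _ _) (fun ω => ?_)
    exact Finset.sup'_mono _ (Finset.Icc_subset_Icc le_rfl hmn) hTne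
  -- assemble
  have hni : ∀ f : Fin n → Fin B, Integrable (fun ω => Finset.univ.sup'
      ⟨⟨0, by omega⟩, Finset.mem_univ _⟩ (fun i => X ((f i : ℕ) + 1) ω)) μ := by
    intro f
    set S : Finset ℕ := Finset.univ.image (fun i : Fin n => (f i : ℕ) + 1) with hSdef
    have hS : S.Nonempty :=
      ⟨(f ⟨0, by omega⟩ : ℕ) + 1, Finset.mem_image_of_mem _ (Finset.mem_univ _)⟩
    have heq : ∀ ω, Finset.univ.sup' ⟨⟨0, by omega⟩, Finset.mem_univ _⟩
        (fun i => X ((f i : ℕ) + 1) ω) = S.sup' hS (fun i => X i ω) := by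
      intro ω; exact (Finset.sup'_image hS (fun i => X i ω)).symm
    simp_rw [heq]
    exact hintS S hS
  rw [integral_div, integral_finset_sum _ (fun f _ => hni f)]
  rw [div_le_iff₀ (by positivity)]
  calc ∑ f : Fin n → Fin B, ∫ ω, Finset.univ.sup' ⟨⟨0, by omega⟩, Finset.mem_univ _⟩
        (fun i => X ((f i : ℕ) + 1) ω) ∂μ
      ≤ ∑ _f : Fin n → Fin B, θ := Finset.sum_le_sum (fun f _ => hbound f)
    _ = (B : ℝ) ^ n * θ := by simp [Finset.card_univ, mul_comm]
    _ = θ * (B : ℝ) ^ n := by ring
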